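/- Let Z_1 and Z_2 be independent standard Gaussian random variables on a probability space (Ω, 𝓕, P), let μ_1, μ_2 ∈ ℝ, σ_1 > 0, σ_2 > 0, and ρ ∈ (−1, 1). Define X := μ_1 + σ_1·(ρ·Z_2 + √(1 − ρ²)·Z_1) and Y := μ_2 + σ_2·Z_2, so that (X, Y) is bivariate Gaussian with means μ_1, μ_2, standard deviations σ_1, σ_2 and correlation ρ. Then, almost surely, E[|X| | σ(Y)] = m(Y)·(1 − 2Φ(c(Y))) + 2σ_1√(1 − ρ²)·φ(c(Y)), where m(y) := μ_1 + ρ(σ_1/σ_2)(y − μ_2) and c(y) := −m(y)/(σ_1√(1 − ρ²)). -/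

import Mathlib

open MeasureTheory ProbabilityTheory Real

/-- The standard normal probability density function `φ`. -/
noncomputable def stdGaussianPDF (z : ℝ) : ℝ :=
  Real.exp (-z ^ 2 / 2) / Real.sqrt (2 * Real.pi)

/-- The standard normal cumulative distribution function `Φ`. -/
noncomputable def stdGaussianCDF (y : ℝ) : ℝ :=
  ∫ z in Set.Iic y, stdGaussianPDF z

/-- For a bivariate Gaussian pair `(X, Y)` with means `μ₁, μ₂`, standard
deviations `σ₁, σ₂ > 0` and correlation `ρ ∈ (-1, 1)`, built from independent standard
Gaussians `Z₁, Z₂`, almost surely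
`E[|X| | σ(Y)] = m(Y)·(1 − 2Φ(c(Y))) + 2σ₁√(1 − ρ²)·φ(c(Y))` where
`m(y) = μ₁ + ρ(σ₁/σ₂)(y − μ₂)` and `c(y) = −m(y)/(σ₁√(1 − ρ²))`. -/
lemma stdPDF_eq : gaussianPDFReal 0 1 = stdGaussianPDF := by
  ext x
  simp [gaussianPDFReal, stdGaussianPDF, div_eq_mul_inv, mul_comm]

lemma stdPDF_nonneg (x : ℝ) : 0 ≤ stdGaussianPDF x := by
  rw [← stdPDF_eq]; exact gaussianPDFReal_nonneg 0 1 x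

lemma stdPDF_continuous : Continuous stdGaussianPDF := by
  unfold stdGaussianPDF
  fun_prop

lemma stdPDF_measurable : Measurable stdGaussianPDF := stdPDF_continuous.measurable

lemma stdPDF_integrable : Integrable stdGaussianPDF := by
  rw [← stdPDF_eq]; exact integrable_gaussianPDFReal 0 1

lemma stdPDF_integral : ∫ x, stdGaussianPDF x = 1 := by
  rw [← stdPDF_eq]; exact integral_gaussianPDFReal_eq_one 0 one_ne_zero

lemma stdPDF_mul_integrable : Integrable (fun x => x * stdGaussianPDF x) := by
  have h : Integrable (fun x : ℝ => x * Real.exp (-(1/2 : ℝ) * x ^ 2)) :=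
    integrable_mul_exp_neg_mul_sq (by norm_num)
  have := h.mul_const (Real.sqrt (2 * Real.pi))⁻¹
  refine this.congr ?_
  filter_upwards with x
  unfold stdGaussianPDF
  rw [div_eq_mul_inv]
  ring_nf

lemma stdPDF_hasDerivAt (x : ℝ) :
    HasDerivAt (fun y => -stdGaussianPDF y) (x * stdGaussianPDF x) x := by
  have h1 : HasDerivAt (fun y : ℝ => -y ^ 2 / 2) (-x) x := by
    have := ((hasDerivAt_pow 2 x).neg).div_const 2
    refine this.congr_deriv ?_
    push_cast; ring
  have h2 : HasDerivAt (fun y : ℝ => Real.exp (-y ^ 2 / 2)) (Real.exp (-x ^ 2 / 2) * (-x)) x :=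
    (Real.hasDerivAt_exp _).comp x h1
  have h3 := (h2.div_const (Real.sqrt (2 * Real.pi))).neg
  refine h3.congr_deriv ?_
  unfold stdGaussianPDF
  field_simp

lemma stdPDF_tendsto_atTop : Filter.Tendsto stdGaussianPDF Filter.atTop (nhds 0) := by
  unfold stdGaussianPDF
  rw [show (0:ℝ) = 0 / Real.sqrt (2 * Real.pi) by simp]
  apply Filter.Tendsto.div_const
  apply Real.tendsto_exp_atBot.comp
  have h1 : Filter.Tendsto (fun x : ℝ => x ^ 2) Filter.atTop Filter.atTop :=
    Filter.tendsto_pow_atTop two_ne_zero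
  have h2 := (Filter.tendsto_neg_atTop_atBot.comp h1).atBot_div_const (by norm_num : (0:ℝ) < 2)
  exact h2.congr (fun x => by simp [neg_div])

lemma stdPDF_tendsto_atBot : Filter.Tendsto stdGaussianPDF Filter.atBot (nhds 0) := by
  have := stdPDF_tendsto_atTop.comp Filter.tendsto_neg_atBot_atTop
  refine this.congr (fun x => ?_)
  simp [stdGaussianPDF, Function.comp, neg_pow]

lemma integral_Iic_mul_stdPDF (c : ℝ) :
    ∫ x in Set.Iic c, x * stdGaussianPDF x = -stdGaussianPDF c := by
  have := integral_Iic_of_hasDerivAt_of_tendsto'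
    (f := fun y => -stdGaussianPDF y) (f' := fun x => x * stdGaussianPDF x) (a := c) (m := 0)
    (fun x _ => stdPDF_hasDerivAt x) (stdPDF_mul_integrable.integrableOn)
    (by simpa using stdPDF_tendsto_atBot.neg)
  simpa using this

lemma integral_Ioi_mul_stdPDF (c : ℝ) :
    ∫ x in Set.Ioi c, x * stdGaussianPDF x = stdGaussianPDF c := by
  have := integral_Ioi_of_hasDerivAt_of_tendsto'
    (f := fun y => -stdGaussianPDF y) (f' := fun x => x * stdGaussianPDF x) (a := c) (m := 0)
    (fun x _ => stdPDF_hasDerivAt x) (stdPDF_mul_integrable.integrableOn)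
    (by simpa using stdPDF_tendsto_atTop.neg)
  simpa using this

lemma integral_Ioi_stdPDF (c : ℝ) :
    ∫ x in Set.Ioi c, stdGaussianPDF x = 1 - stdGaussianCDF c := by
  have h := integral_add_compl (measurableSet_Iic (a := c)) stdPDF_integrable
  rw [Set.compl_Iic] at h
  have : stdGaussianCDF c = ∫ x in Set.Iic c, stdGaussianPDF x := rfl
  rw [stdPDF_integral] at h
  linarith [h]

lemma stdCDF_nonneg (c : ℝ) : 0 ≤ stdGaussianCDF c :=
  setIntegral_nonneg measurableSet_Iic (fun x _ => stdPDF_nonneg x)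

lemma stdCDF_le_one (c : ℝ) : stdGaussianCDF c ≤ 1 := by
  have := integral_Ioi_stdPDF c
  have h2 : 0 ≤ ∫ x in Set.Ioi c, stdGaussianPDF x :=
    setIntegral_nonneg measurableSet_Ioi (fun x _ => stdPDF_nonneg x)
  linarith

lemma stdCDF_mono : Monotone stdGaussianCDF := by
  intro a b hab
  exact setIntegral_mono_set stdPDF_integrable.integrableOn
    (Filter.Eventually.of_forall (fun x => stdPDF_nonneg x))
    (HasSubset.Subset.eventuallyLE (Set.Iic_subset_Iic.mpr hab))

lemma stdCDF_measurable : Measurable stdGaussianCDF := stdCDF_mono.measurable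

lemma stdPDF_le (x : ℝ) : stdGaussianPDF x ≤ (Real.sqrt (2 * Real.pi))⁻¹ := by
  unfold stdGaussianPDF
  rw [div_eq_mul_inv]
  have h1 : Real.exp (-x ^ 2 / 2) ≤ 1 := by
    rw [Real.exp_le_one_iff]
    nlinarith [sq_nonneg x]
  have h2 : (0:ℝ) ≤ (Real.sqrt (2 * Real.pi))⁻¹ := by positivity
  nlinarith

lemma gaussianPDF_eq_coe :
    gaussianPDF 0 1 = fun x => (((stdGaussianPDF x).toNNReal : NNReal) : ENNReal) := by
  ext x
  rw [gaussianPDF, stdPDF_eq, ENNReal.ofReal]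

lemma integral_std_gaussian (f : ℝ → ℝ) :
    ∫ x, f x ∂(gaussianReal 0 1) = ∫ x, f x * stdGaussianPDF x := by
  rw [gaussianReal_of_var_ne_zero 0 one_ne_zero, gaussianPDF_eq_coe,
    integral_withDensity_eq_integral_smul (stdPDF_measurable.real_toNNReal)]
  congr 1
  ext x
  simp [NNReal.smul_def, Real.coe_toNNReal _ (stdPDF_nonneg x), mul_comm]

lemma integrable_std_gaussian_iff (f : ℝ → ℝ) :
    Integrable f (gaussianReal 0 1) ↔ Integrable (fun x => f x * stdGaussianPDF x) := by
  rw [gaussianReal_of_var_ne_zero 0 one_ne_zero, gaussianPDF_eq_coe,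
    integrable_withDensity_iff_integrable_smul (stdPDF_measurable.real_toNNReal)]
  constructor <;> intro h <;> refine h.congr (Filter.Eventually.of_forall fun x => ?_) <;>
    simp [NNReal.smul_def, Real.coe_toNNReal _ (stdPDF_nonneg x), mul_comm]

lemma integrable_id_std_gaussian : Integrable (fun x => x) (gaussianReal 0 1) := by
  rw [integrable_std_gaussian_iff]
  exact stdPDF_mul_integrable

lemma integrable_affine_abs_std_gaussian (a s : ℝ) :
    Integrable (fun z => |a + s * z|) (gaussianReal 0 1) := by
  have : Integrable (fun z : ℝ => a + s * z) (gaussianReal 0 1) :=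
    (integrable_const a).add (integrable_id_std_gaussian.const_mul s)
  exact this.abs

lemma abs_integral_std_gaussian (a s : ℝ) (hs : 0 < s) :
    ∫ z, |a + s * z| ∂(gaussianReal 0 1)
      = a * (1 - 2 * stdGaussianCDF (-a / s)) + 2 * s * stdGaussianPDF (-a / s) := by
  set c : ℝ := -a / s with hc
  have hint : Integrable (fun x : ℝ => |a + s * x| * stdGaussianPDF x) := by
    rw [← integrable_std_gaussian_iff]
    exact integrable_affine_abs_std_gaussian a s
  rw [integral_std_gaussian]
  have hsplit := (integral_add_compl (measurableSet_Iic (a := c)) hint).symm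
  rw [Set.compl_Iic] at hsplit
  rw [hsplit]
  have hIic : ∫ x in Set.Iic c, |a + s * x| * stdGaussianPDF x
      = -(a * stdGaussianCDF c) + s * stdGaussianPDF c := by
    rw [setIntegral_congr_fun measurableSet_Iic
      (g := fun x => -(a * stdGaussianPDF x) + (-s) * (x * stdGaussianPDF x)) ?_]
    · rw [integral_add, integral_neg, integral_const_mul, integral_const_mul,
        integral_Iic_mul_stdPDF]
      · show -(a * stdGaussianCDF c) + _ = _
        ring
      · exact (stdPDF_integrable.integrableOn.const_mul a).neg
      · exact (stdPDF_mul_integrable.integrableOn.const_mul (-s))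
    · intro x hx
      have hxc : x ≤ -a / s := hx
      have h1 : s * x ≤ s * (-a / s) := mul_le_mul_of_nonneg_left hxc hs.le
      have h2 : s * (-a / s) = -a := by field_simp
      have hx' : a + s * x ≤ 0 := by linarith
      show |a + s * x| * stdGaussianPDF x = _
      rw [abs_of_nonpos hx']
      ring
  have hIoi : ∫ x in Set.Ioi c, |a + s * x| * stdGaussianPDF x
      = a * (1 - stdGaussianCDF c) + s * stdGaussianPDF c := by
    rw [setIntegral_congr_fun measurableSet_Ioi
      (g := fun x => a * stdGaussianPDF x + s * (x * stdGaussianPDF x)) ?_]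
    · rw [integral_add, integral_const_mul, integral_const_mul,
        integral_Ioi_mul_stdPDF, integral_Ioi_stdPDF]
      · exact (stdPDF_integrable.integrableOn.const_mul a)
      · exact (stdPDF_mul_integrable.integrableOn.const_mul s)
    · intro x hx
      have hxc : -a / s < x := hx
      have h1 : s * (-a / s) < s * x := mul_lt_mul_of_pos_left hxc hs
      have h2 : s * (-a / s) = -a := by field_simp
      have hx' : 0 ≤ a + s * x := by linarith
      show |a + s * x| * stdGaussianPDF x = _
      rw [abs_of_nonneg hx']
      ring
  rw [hIic, hIoi]
  ring

theorem stmt_2 {Ω : Type*} [MeasurableSpace Ω] (P : Measure Ω) [IsProbabilityMeasure P]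
    (Z₁ Z₂ : Ω → ℝ) (hZ₁ : Measurable Z₁) (hZ₂ : Measurable Z₂)
    (hindep : IndepFun Z₁ Z₂ P)
    (hlaw₁ : Measure.map Z₁ P = gaussianReal 0 1)
    (hlaw₂ : Measure.map Z₂ P = gaussianReal 0 1)
    (μ₁ μ₂ σ₁ σ₂ ρ : ℝ) (hσ₁ : 0 < σ₁) (hσ₂ : 0 < σ₂) (hρ : ρ ∈ Set.Ioo (-1 : ℝ) 1)
    (X Y : Ω → ℝ)
    (hX : X = fun ω => μ₁ + σ₁ * (ρ * Z₂ ω + Real.sqrt (1 - ρ ^ 2) * Z₁ ω))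
    (hY : Y = fun ω => μ₂ + σ₂ * Z₂ ω)
    (m : ℝ → ℝ) (hm : m = fun y => μ₁ + ρ * (σ₁ / σ₂) * (y - μ₂))
    (c : ℝ → ℝ) (hc : c = fun y => -(m y) / (σ₁ * Real.sqrt (1 - ρ ^ 2))) :
    ∀ᵐ ω ∂P,
      (P[fun ω => |X ω| | MeasurableSpace.comap Y inferInstance]) ω
        = m (Y ω) * (1 - 2 * stdGaussianCDF (c (Y ω)))
          + 2 * σ₁ * Real.sqrt (1 - ρ ^ 2) * stdGaussianPDF (c (Y ω)) := by
  have hρ2 : (0:ℝ) < 1 - ρ ^ 2 := by nlinarith [hρ.1, hρ.2]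
  have hsq_pos : 0 < Real.sqrt (1 - ρ ^ 2) := Real.sqrt_pos.mpr hρ2
  have hs₀_pos : 0 < σ₁ * Real.sqrt (1 - ρ ^ 2) := mul_pos hσ₁ hsq_pos
  set γ : Measure ℝ := gaussianReal 0 1 with hγ
  set g : ℝ → ℝ := fun y => m y * (1 - 2 * stdGaussianCDF (c y))
      + 2 * σ₁ * Real.sqrt (1 - ρ ^ 2) * stdGaussianPDF (c y) with hg
  -- measurability
  have hYmeas : Measurable Y := by rw [hY]; exact measurable_const.add (hZ₂.const_mul σ₂)
  have hmm : Measurable m := by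
    rw [hm]
    exact measurable_const.add ((measurable_id.sub measurable_const).const_mul _)
  have hcm : Measurable c := by rw [hc]; exact hmm.neg.div_const _
  have hgm : Measurable g := by
    rw [hg]
    exact (hmm.mul (measurable_const.sub ((stdCDF_measurable.comp hcm).const_mul 2))).add
      ((stdPDF_measurable.comp hcm).const_mul _)
  -- key pointwise computation
  have hkey : ∀ y : ℝ, (∫ z, |m y + σ₁ * Real.sqrt (1 - ρ ^ 2) * z| ∂γ) = g y := by
    intro y
    rw [hγ, abs_integral_std_gaussian (m y) _ hs₀_pos, hg, hc]
    ring
  -- X decomposition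
  have hXeq : ∀ ω, X ω = m (Y ω) + σ₁ * Real.sqrt (1 - ρ ^ 2) * Z₁ ω := by
    intro ω
    rw [hX, hY, hm]
    field_simp
    ring
  -- integrability
  have hintZ₁ : Integrable Z₁ P := by
    have h : Integrable (id : ℝ → ℝ) (Measure.map Z₁ P) := by
      rw [hlaw₁]; exact integrable_id_std_gaussian
    rw [integrable_map_measure aestronglyMeasurable_id hZ₁.aemeasurable] at h
    exact h
  have hintZ₂ : Integrable Z₂ P := by
    have h : Integrable (id : ℝ → ℝ) (Measure.map Z₂ P) := by
      rw [hlaw₂]; exact integrable_id_std_gaussian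
    rw [integrable_map_measure aestronglyMeasurable_id hZ₂.aemeasurable] at h
    exact h
  have hintX : Integrable X P := by
    rw [hX]
    exact (integrable_const μ₁).add
      (((hintZ₂.const_mul ρ).add (hintZ₁.const_mul (Real.sqrt (1 - ρ ^ 2)))).const_mul σ₁)
  have habsX : Integrable (fun ω => |X ω|) P := hintX.abs
  have hintmY : Integrable (fun ω => m (Y ω)) P := by
    have he : (fun ω => m (Y ω)) = fun ω => μ₁ + (ρ * σ₁) * Z₂ ω := by
      funext ω
      rw [hm, hY]
      field_simp
      ring
    rw [he]
    exact (integrable_const μ₁).add (hintZ₂.const_mul _)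
  have hgbound : ∀ y : ℝ, |g y|
      ≤ |m y| + 2 * σ₁ * Real.sqrt (1 - ρ ^ 2) * (Real.sqrt (2 * Real.pi))⁻¹ := by
    intro y
    rw [hg]
    refine (abs_add_le _ _).trans ?_
    have h1 : |1 - 2 * stdGaussianCDF (c y)| ≤ 1 := by
      have := stdCDF_nonneg (c y)
      have := stdCDF_le_one (c y)
      rw [abs_le]; constructor <;> linarith
    have t1 : |m y * (1 - 2 * stdGaussianCDF (c y))| ≤ |m y| := by
      rw [abs_mul]
      calc |m y| * |1 - 2 * stdGaussianCDF (c y)| ≤ |m y| * 1 :=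
            mul_le_mul_of_nonneg_left h1 (abs_nonneg _)
        _ = |m y| := mul_one _
    have t2 : |2 * σ₁ * Real.sqrt (1 - ρ ^ 2) * stdGaussianPDF (c y)|
        ≤ 2 * σ₁ * Real.sqrt (1 - ρ ^ 2) * (Real.sqrt (2 * Real.pi))⁻¹ := by
      rw [abs_of_nonneg (mul_nonneg (by positivity) (stdPDF_nonneg _))]
      exact mul_le_mul_of_nonneg_left (stdPDF_le _) (by positivity)
    linarith
  have hgYint : Integrable (fun ω => g (Y ω)) P := by
    refine Integrable.mono' (hintmY.abs.add (integrable_const (2 * σ₁ * Real.sqrt (1 - ρ ^ 2) * (Real.sqrt (2 * Real.pi))⁻¹)))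
      ((hgm.comp hYmeas).aestronglyMeasurable) ?_
    filter_upwards with ω
    simpa [Real.norm_eq_abs] using hgbound (Y ω)
  -- conditional expectation
  have h_le : MeasurableSpace.comap Y inferInstance ≤ _ := hYmeas.comap_le
  haveI : SigmaFinite (P.trim h_le) := by
    haveI := isFiniteMeasure_trim h_le (μ := P)
    infer_instance
  have hmain : (fun ω => g (Y ω)) =ᵐ[P]
      P[fun ω => |X ω| | MeasurableSpace.comap Y inferInstance] := by
    refine ae_eq_condExp_of_forall_setIntegral_eq h_le habsX
      (fun s _ _ => hgYint.integrableOn) ?_ ?_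
    · -- set integral equality
      rintro s ⟨B, hB, rfl⟩ -
      set B' : Set ℝ := (fun z => μ₂ + σ₂ * z) ⁻¹' B with hB'
      have hB'meas : MeasurableSet B' :=
        (measurable_const.add (measurable_id.const_mul σ₂)) hB
      have hpre : Y ⁻¹' B = Z₂ ⁻¹' B' := by
        ext ω; simp [hY, hB']
      have hgfun : Measurable (fun z : ℝ => g (μ₂ + σ₂ * z)) :=
        hgm.comp (measurable_const.add (measurable_id.const_mul σ₂))
      have hL : ∫ ω in Y ⁻¹' B, g (Y ω) ∂P = ∫ z in B', g (μ₂ + σ₂ * z) ∂γ := by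
        rw [hpre]
        have h1 : ∫ z in B', g (μ₂ + σ₂ * z) ∂(Measure.map Z₂ P)
            = ∫ ω in Z₂ ⁻¹' B', g (μ₂ + σ₂ * Z₂ ω) ∂P :=
          setIntegral_map hB'meas (by rw [hlaw₂]; exact hgfun.aestronglyMeasurable)
            hZ₂.aemeasurable
        rw [hlaw₂] at h1
        rw [h1]
        apply setIntegral_congr_fun (hZ₂ hB'meas)
        intro ω _
        rw [hY]
      -- joint law
      have hT : Measurable (fun ω => (Z₁ ω, Z₂ ω)) := hZ₁.prodMk hZ₂
      have hjoint : Measure.map (fun ω => (Z₁ ω, Z₂ ω)) P = γ.prod γ := by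
        rw [(indepFun_iff_map_prod_eq_prod_map_map hZ₁.aemeasurable hZ₂.aemeasurable).mp hindep,
          hlaw₁, hlaw₂]
      set F : ℝ × ℝ → ℝ :=
        fun p => |m (μ₂ + σ₂ * p.2) + σ₁ * Real.sqrt (1 - ρ ^ 2) * p.1| with hF
      have hFmeas : Measurable F := by
        rw [hF]
        exact ((hmm.comp (measurable_const.add (measurable_snd.const_mul σ₂))).add
          (measurable_fst.const_mul _)).abs
      have hXF : ∀ ω, |X ω| = F (Z₁ ω, Z₂ ω) := by
        intro ω
        rw [hF, hXeq ω, hY]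
      have hpre2 : Y ⁻¹' B = (fun ω => (Z₁ ω, Z₂ ω)) ⁻¹' (Set.univ ×ˢ B') := by
        ext ω; simp [hY, hB']
      have hFint : Integrable F (γ.prod γ) := by
        rw [← hjoint, integrable_map_measure hFmeas.aestronglyMeasurable hT.aemeasurable]
        exact habsX.congr (Filter.Eventually.of_forall (fun ω => hXF ω))
      have hFint' : Integrable F (γ.prod (γ.restrict B')) := by
        have := hFint.integrableOn (s := Set.univ ×ˢ B')
        rwa [IntegrableOn, ← Measure.prod_restrict, Measure.restrict_univ] at this
      have hR : ∫ ω in Y ⁻¹' B, |X ω| ∂P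
          = ∫ z in B', (∫ z₁, |m (μ₂ + σ₂ * z) + σ₁ * Real.sqrt (1 - ρ ^ 2) * z₁| ∂γ) ∂γ := by
        calc ∫ ω in Y ⁻¹' B, |X ω| ∂P
            = ∫ ω in (fun ω => (Z₁ ω, Z₂ ω)) ⁻¹' (Set.univ ×ˢ B'), F (Z₁ ω, Z₂ ω) ∂P := by
              rw [← hpre2]
              exact setIntegral_congr_fun (hYmeas hB) (fun ω _ => hXF ω)
          _ = ∫ p in Set.univ ×ˢ B', F p ∂(Measure.map (fun ω => (Z₁ ω, Z₂ ω)) P) :=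
              (setIntegral_map (MeasurableSet.univ.prod hB'meas)
                (by rw [hjoint]; exact hFmeas.aestronglyMeasurable) hT.aemeasurable).symm
          _ = ∫ p in Set.univ ×ˢ B', F p ∂(γ.prod γ) := by rw [hjoint]
          _ = ∫ p, F p ∂(γ.prod (γ.restrict B')) := by
              rw [← Measure.prod_restrict, Measure.restrict_univ]
          _ = ∫ z₂, ∫ z₁, F (z₁, z₂) ∂γ ∂(γ.restrict B') :=
              MeasureTheory.integral_prod_symm F hFint'
          _ = ∫ z in B', (∫ z₁, |m (μ₂ + σ₂ * z) + σ₁ * Real.sqrt (1 - ρ ^ 2) * z₁| ∂γ) ∂γ := rfl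
      rw [hL, hR]
      apply setIntegral_congr_fun hB'meas
      intro z _
      exact (hkey (μ₂ + σ₂ * z)).symm
    · exact ((hgm.comp (Measurable.of_comap_le le_rfl)).stronglyMeasurable).aestronglyMeasurable
  exact hmain.symm
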